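/- Let p be a prime and e ≥ 1, and let K be any subgroup of M = (ℤ/p^eℤ)². Then the cardinality of K equals the product over j = 0, …, e−1 of the cardinalities of the p-torsion subgroups of p^j·K; that is, |K| = ∏_{j=0}^{e−1} |{x ∈ p^j·K : p·x = 0}|. -/

import Mathlib

private def smulHom (p : ℕ) (M : Type*) [AddCommMonoid M] : M →+ M where
  toFun x := p • x
  map_zero' := smul_zero p
  map_add' := smul_add p

private lemma card_step {M : Type*} [AddCommGroup M] (p : ℕ) (H : AddSubgroup M) :
    Nat.card H = Nat.card {x : M | x ∈ H ∧ p • x = 0} * Nat.card (H.map (smulHom p M)) := by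
  let f : H →+ M := (smulHom p M).comp H.subtype
  have hrange : f.range = H.map (smulHom p M) := by
    rw [AddMonoidHom.range_comp, AddSubgroup.range_subtype]
  have h1 : Nat.card H = Nat.card (H ⧸ f.ker) * Nat.card f.ker :=
    AddSubgroup.card_eq_card_quotient_mul_card_addSubgroup f.ker
  have h2 : Nat.card (H ⧸ f.ker) = Nat.card f.range :=
    Nat.card_congr (QuotientAddGroup.quotientKerEquivRange f).toEquiv
  have h3 : Nat.card f.ker = Nat.card {x : M | x ∈ H ∧ p • x = 0} := by
    refine Nat.card_congr ⟨fun x => ⟨x.1.1, x.1.2, x.2⟩, fun x => ⟨⟨x.1, x.2.1⟩, x.2.2⟩,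
      fun x => rfl, fun x => rfl⟩
  rw [h1, h2, hrange, h3, mul_comm]

theorem card_eq_prod_card_torsion (p : ℕ) (hp : p.Prime) (e : ℕ) (he : 1 ≤ e)
    (K : AddSubgroup (ZMod (p ^ e) × ZMod (p ^ e))) :
    Nat.card K = ∏ j ∈ Finset.range e,
      Nat.card {x : ZMod (p ^ e) × ZMod (p ^ e) |
        (∃ y ∈ K, p ^ j • y = x) ∧ p • x = 0} := by
  haveI : NeZero (p ^ e) := ⟨pow_ne_zero e hp.ne_zero⟩
  set G := ZMod (p ^ e) × ZMod (p ^ e) with hG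
  let S : ℕ → AddSubgroup G := fun j => K.map (smulHom (p ^ j) G)
  have hpow : ∀ x : G, p ^ e • x = 0 := by
    intro x
    rw [nsmul_eq_mul, show ((p ^ e : ℕ) : G) = 0 from
      Prod.ext (ZMod.natCast_self _) (ZMod.natCast_self _), zero_mul]
  have hSsucc : ∀ j, (S j).map (smulHom p G) = S (j + 1) := by
    intro j
    rw [show S (j+1) = K.map (smulHom (p^(j+1)) G) from rfl, AddSubgroup.map_map]
    congr 1
    refine DFunLike.ext _ _ fun x => ?_
    show p • (p ^ j • x) = p ^ (j + 1) • x
    rw [← mul_smul, ← pow_succ']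
  have hSe : S e = ⊥ := by
    rw [eq_bot_iff]
    rintro x ⟨y, _, rfl⟩
    simpa [smulHom] using hpow y
  let t : ℕ → ℕ := fun j => Nat.card {x : G | (∃ y ∈ K, p ^ j • y = x) ∧ p • x = 0}
  have ht : ∀ j, Nat.card {x : G | x ∈ S j ∧ p • x = 0} = t j := by
    intro j
    rfl
  have key : ∀ k, k ≤ e → Nat.card (S (e - k)) = ∏ i ∈ Finset.Ico (e - k) e, t i := by
    intro k
    induction k with
    | zero => intro _; simp [hSe]
    | succ k ih =>
      intro hk
      have hk' : k ≤ e := le_of_lt (Nat.lt_of_lt_of_le (Nat.lt_succ_self k) hk)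
      have hlt : e - (k + 1) < e := by omega
      have hsub : e - (k + 1) + 1 = e - k := by omega
      rw [Finset.prod_eq_prod_Ico_succ_bot hlt, hsub, ← ih hk', card_step p (S (e - (k+1))),
        hSsucc, hsub, ht]
  have hS0 : S 0 = K := by
    ext x
    simp [S, smulHom]
  have := key e le_rfl
  simp only [Nat.sub_self] at this
  rw [hS0] at this
  rw [this]
  rw [Finset.range_eq_Ico]
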